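/- Let p ≥ 2 be a natural number, and let S ≥ p² and R be positive integers with gcd(R, S) = 1; let R' satisfy R'·R ≡ 1 (mod S). Let a and c be natural numbers with a < p and c < p, and set the encrypted coefficient A = (R·a) mod S and the signature element H = (R'·c) mod S. Then ((H·A) mod S) mod p = (c·a) mod p. -/
import Mathlib

/-- HPPK DS coefficient recovery: with `S ≥ p²`, `A = (R·a) % S` the encrypted
coefficient and `H = (R'·c) % S` the signature element (`R'` the inverse of `R` mod `S`),
one has `((H·A) % S) % p = (c·a) % p`. -/
theorem stmt_10 (p S R R' a c : ℕ) (hp : 2 ≤ p) (hS : p ^ 2 ≤ S) (hSpos : 0 < S)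
    (hRpos : 0 < R) (hgcd : Nat.gcd R S = 1) (hinv : R' * R ≡ 1 [MOD S])
    (ha : a < p) (hc : c < p) :
    ((((R' * c) % S) * ((R * a) % S)) % S) % p = (c * a) % p := by
  have hca : c * a < S := lt_of_lt_of_le (by nlinarith) hS
  have h1 : (((R' * c) % S) * ((R * a) % S)) % S = (c * a) % S := by
    conv_lhs => rw [Nat.mul_mod, Nat.mod_mod_of_dvd _ dvd_rfl, Nat.mod_mod_of_dvd _ dvd_rfl, ← Nat.mul_mod]
    calc (R' * c * (R * a)) % S = (R' * R * (c * a)) % S := by ring_nf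
      _ = (1 * (c * a)) % S := by
          rw [Nat.mul_mod, hinv, ← Nat.mul_mod]
      _ = (c * a) % S := by rw [one_mul]
  rw [h1, Nat.mod_eq_of_lt hca]
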